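/- In the tridiagonal setting, suppose in addition that the multiplication operator M_z is bounded on H. If M_z* is hypercyclic on H, then liminf_n |μ_n| = 0. -/

import Mathlib

open Metric Filter ContinuousLinearMap
open Topology

/-- Key estimate: in the tridiagonal setting, if `δ ≤ |μ n|` for all `n ≥ N`, then
`‖Mz^m (e 0)‖` is bounded uniformly over `m ≥ N`. -/
lemma stmt13_aux {H : Type*}
    [NormedAddCommGroup H] [InnerProductSpace ℂ H] [CompleteSpace H]
    (ι : H →ₗ[ℂ] (ℂ → ℂ))
    (hinj : ∀ f g : H, Set.EqOn (ι f) (ι g) (ball (0 : ℂ) 1) → f = g)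
    (heval : ∀ w ∈ ball (0 : ℂ) 1, Continuous fun f : H => ι f w)
    (μ ν : ℕ → ℂ) (hμ : ∀ n, μ n ≠ 0)
    (R : ℝ) (hR : ∀ n, ‖ν n / μ (n + 1)‖ ≤ R) (hR1 : R < 1)
    (e : ℕ → H)
    (he : ∀ n, ∀ w ∈ ball (0 : ℂ) 1, ι (e n) w = μ n * w ^ n + ν n * w ^ (n + 1))
    (hONn : ∀ n, ‖e n‖ = 1)
    (Mz : H →L[ℂ] H)
    (hMz : ∀ f : H, ∀ w ∈ ball (0 : ℂ) 1, ι (Mz f) w = w * ι f w)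
    (δ : ℝ) (hδ : 0 < δ) (N : ℕ) (hN : ∀ n, N ≤ n → δ ≤ ‖μ n‖)
    (m : ℕ) (hm : N ≤ m) :
    ‖(Mz ^ m) (e 0)‖ ≤ ‖μ 0‖ / δ
      + (‖ν 0‖ + R * ‖μ 0‖) / δ * (1 - R)⁻¹ := by
  have hR0 : 0 ≤ R := le_trans (norm_nonneg _) (hR 0)
  set A : ℝ := (‖ν 0‖ + R * ‖μ 0‖) / δ with hA
  have hA0 : 0 ≤ A := by
    rw [hA]
    exact div_nonneg (add_nonneg (norm_nonneg _)
      (mul_nonneg hR0 (norm_nonneg _))) hδ.le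
  have hsmul : ∀ (c : ℂ) (f : H) (w : ℂ), ι (c • f) w = c * ι f w := by
    intro c f w; rw [map_smul]; rfl
  -- the coefficient sequence
  set β : ℕ → ℂ := fun j => Nat.rec (μ 0 / μ m)
    (fun j b => ((if j = 0 then ν 0 else 0) - b * ν (m + j)) / μ (m + j + 1)) j with hβdef
  have hβ0 : β 0 = μ 0 / μ m := rfl
  have hβs : ∀ j, β (j + 1)
      = ((if j = 0 then ν 0 else 0) - β j * ν (m + j)) / μ (m + j + 1) := fun j => rfl
  clear_value β
  -- bounds on the coefficients
  have habs0 : ‖β 0‖ ≤ ‖μ 0‖ / δ := by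
    rw [hβ0, norm_div]
    exact div_le_div_of_nonneg_left (norm_nonneg _) hδ (hN m hm)
  have habsS : ∀ j, ‖β (j + 1)‖ ≤ A * R ^ j := by
    intro j
    induction j with
    | zero =>
      have hβ1 : β 1 = (ν 0 - β 0 * ν m) / μ (m + 1) := by
        simpa using hβs 0
      have hc : (0:ℝ) < ‖μ (m + 1)‖ := lt_of_lt_of_le hδ (hN _ (by omega))
      have tri : ‖ν 0 - β 0 * ν m‖
          ≤ ‖ν 0‖ + ‖β 0‖ * ‖ν m‖ := by
        simpa [norm_mul] using norm_sub_le (ν 0) (β 0 * ν m)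
      have h2b : ‖ν m‖ / ‖μ (m + 1)‖ ≤ R := by
        rw [← norm_div]; exact hR m
      calc ‖β 1‖
          = ‖ν 0 - β 0 * ν m‖ / ‖μ (m + 1)‖ := by
            rw [hβ1, norm_div]
        _ ≤ (‖ν 0‖ + ‖β 0‖ * ‖ν m‖)
              / ‖μ (m + 1)‖ := by gcongr
        _ = ‖ν 0‖ / ‖μ (m + 1)‖
              + ‖β 0‖ * (‖ν m‖ / ‖μ (m + 1)‖) := by
            rw [add_div, mul_div_assoc]
        _ ≤ ‖ν 0‖ / δ + (‖μ 0‖ / δ) * R := by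
            apply add_le_add
            · exact div_le_div_of_nonneg_left (norm_nonneg _) hδ (hN _ (by omega))
            · exact mul_le_mul habs0 h2b (by positivity) (by positivity)
        _ = A * R ^ 0 := by rw [hA]; ring
    | succ j ih =>
      have hval : ‖β (j + 1 + 1)‖
          = ‖β (j + 1)‖ * ‖ν (m + (j + 1)) / μ (m + (j + 1) + 1)‖ := by
        rw [hβs (j + 1), if_neg (by omega : ¬ (j + 1 = 0)), zero_sub, norm_div,
          norm_neg, norm_mul, mul_div_assoc, ← norm_div]
      calc ‖β (j + 1 + 1)‖
          = ‖β (j + 1)‖ * ‖ν (m + (j + 1)) / μ (m + (j + 1) + 1)‖ := hval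
        _ ≤ (A * R ^ j) * R := by
            exact mul_le_mul ih (hR (m + (j + 1))) (norm_nonneg _) (by positivity)
        _ = A * R ^ (j + 1) := by ring
  -- majorant
  set G : ℕ → ℝ := fun j => if j = 0 then ‖μ 0‖ / δ else A * R ^ (j - 1) with hG
  have hβG : ∀ j, ‖β j • e (m + j)‖ ≤ G j := by
    intro j
    rw [norm_smul, hONn, mul_one]
    cases j with
    | zero => simpa [hG] using habs0
    | succ j => simpa [hG] using habsS j
  have hGsum : Summable G := by
    rw [← summable_nat_add_iff 1]
    have : (fun n : ℕ => G (n + 1)) = fun n : ℕ => A * R ^ n := by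
      funext n; simp [hG]
    rw [this]
    exact (summable_geometric_of_lt_one hR0 hR1).mul_left A
  have hGt : ∑' j, G j = ‖μ 0‖ / δ + A * (1 - R)⁻¹ := by
    rw [Summable.tsum_eq_zero_add hGsum]
    have h1 : (fun j : ℕ => G (j + 1)) = fun j : ℕ => A * R ^ j := by
      funext j; simp [hG]
    have h2 : G 0 = ‖μ 0‖ / δ := by simp [hG]
    rw [h1, tsum_mul_left, tsum_geometric_of_lt_one hR0 hR1, h2]
  have hsumnorm : Summable (fun j => ‖β j • e (m + j)‖) :=
    Summable.of_nonneg_of_le (fun j => norm_nonneg _) hβG hGsum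
  have hsum : Summable (fun j => β j • e (m + j)) := Summable.of_norm hsumnorm
  set h : H := ∑' j, β j • e (m + j) with hh
  have hhs : HasSum (fun j => β j • e (m + j)) h := hsum.hasSum
  have hnorm : ‖h‖ ≤ ‖μ 0‖ / δ + A * (1 - R)⁻¹ := by
    rw [hh]
    exact le_trans (norm_tsum_le_tsum_norm hsumnorm)
      (le_trans (Summable.tsum_le_tsum hβG hsumnorm hGsum) hGt.le)
  -- partial sums
  have hpart : ∀ (K : ℕ), ∀ w ∈ ball (0:ℂ) 1,
      ι (∑ j ∈ Finset.range (K + 1), β j • e (m + j)) w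
        = μ 0 * w ^ m + (if 1 ≤ K then ν 0 * w ^ (m + 1) else 0)
          + β K * ν (m + K) * w ^ (m + K + 1) := by
    intro K
    induction K with
    | zero =>
      intro w hw
      have hb0 : β 0 * μ m = μ 0 := by rw [hβ0]; exact div_mul_cancel₀ _ (hμ m)
      rw [Finset.sum_range_one, hsmul, he (m + 0) w hw]
      simp only [Nat.add_zero, if_neg (by omega : ¬ (1:ℕ) ≤ 0)]
      linear_combination w ^ m * hb0
    | succ K ih =>
      intro w hw
      have hbs : β (K + 1) * μ (m + K + 1) = (if K = 0 then ν 0 else 0) - β K * ν (m + K) := by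
        rw [hβs K]; exact div_mul_cancel₀ _ (hμ _)
      have hstep : ι (∑ j ∈ Finset.range (K + 1 + 1), β j • e (m + j)) w
          = ι (∑ j ∈ Finset.range (K + 1), β j • e (m + j)) w
            + β (K + 1) * ι (e (m + (K + 1))) w := by
        rw [Finset.sum_range_succ, map_add, Pi.add_apply, hsmul]
      rw [hstep, ih w hw, he (m + (K + 1)) w hw]
      rw [show m + (K + 1) = m + K + 1 from rfl]
      rcases Nat.eq_zero_or_pos K with hK | hK
      · subst hK
        rw [if_pos rfl] at hbs
        simp only [if_neg (by omega : ¬ (1:ℕ) ≤ 0), if_pos (le_refl 1)]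
        linear_combination w ^ (m + 1) * hbs
      · rw [if_neg (by omega : ¬ K = 0)] at hbs
        rw [if_pos (show (1:ℕ) ≤ K from hK), if_pos (by omega : (1:ℕ) ≤ K + 1)]
        linear_combination w ^ (m + K + 1) * hbs
  -- the tail term tends to `ι h w` minus the main part
  have hiota : ∀ w ∈ ball (0:ℂ) 1,
      Tendsto (fun K => β K * ν (m + K) * w ^ (m + K + 1)) atTop
        (𝓝 (ι h w - (μ 0 * w ^ m + ν 0 * w ^ (m + 1)))) := by
    intro w hw
    set Φ : H →L[ℂ] ℂ :=
      ContinuousLinearMap.mk ((LinearMap.proj w).comp ι) (heval w hw) with hΦ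
    have hΦa : ∀ f, Φ f = ι f w := fun f => rfl
    have T2 : Tendsto (fun K => ∑ j ∈ Finset.range (K + 1), Φ (β j • e (m + j))) atTop
        (𝓝 (Φ h)) :=
      (Φ.hasSum hhs).tendsto_sum_nat.comp (tendsto_add_atTop_nat 1)
    have T3 : Tendsto (fun K => μ 0 * w ^ m + (if 1 ≤ K then ν 0 * w ^ (m + 1) else 0)
        + β K * ν (m + K) * w ^ (m + K + 1)) atTop (𝓝 (ι h w)) := by
      rw [← hΦa h]
      refine T2.congr ?_
      intro K
      calc ∑ j ∈ Finset.range (K + 1), Φ (β j • e (m + j))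
          = Φ (∑ j ∈ Finset.range (K + 1), β j • e (m + j)) := (map_sum Φ _ _).symm
        _ = ι (∑ j ∈ Finset.range (K + 1), β j • e (m + j)) w := hΦa _
        _ = _ := hpart K w hw
    have T4 := T3.sub_const (μ 0 * w ^ m + ν 0 * w ^ (m + 1))
    refine T4.congr' ?_
    filter_upwards [eventually_ge_atTop 1] with K hK
    rw [if_pos hK]; ring
  -- the tail term tends to zero
  have key : ∀ w ∈ ball (0:ℂ) 1, ι h w = μ 0 * w ^ m + ν 0 * w ^ (m + 1) := by
    intro w hw
    have hwlt : ‖w‖ < 1 := by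
      simpa [Complex.dist_eq] using hw
    have hw0 : (0:ℝ) ≤ ‖w‖ := norm_nonneg _
    set ρ : ℝ := (1 + ‖w‖) / 2 with hρ
    have hρ0 : 0 < ρ := by rw [hρ]; linarith
    have hwρ : ‖w‖ < ρ := by rw [hρ]; linarith
    have hρ1 : ρ < 1 := by rw [hρ]; linarith
    have hw' : (ρ : ℂ) ∈ ball (0:ℂ) 1 := by
      simp only [mem_ball, Complex.dist_eq, sub_zero,
        Complex.norm_real, Real.norm_eq_abs, abs_of_pos hρ0]
      exact hρ1
    obtain ⟨M, hM⟩ := ((hiota (ρ:ℂ) hw').norm).bddAbove_range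
    have hM' : ∀ K, ‖β K * ν (m + K) * (ρ:ℂ) ^ (m + K + 1)‖ ≤ M :=
      fun K => hM (Set.mem_range_self K)
    set q : ℝ := ‖w‖ / ρ with hq
    have hq0 : 0 ≤ q := by rw [hq]; positivity
    have hq1 : q < 1 := by rw [hq, div_lt_one hρ0]; exact hwρ
    have hbnd : ∀ K, ‖β K * ν (m + K) * w ^ (m + K + 1)‖ ≤ M * q ^ (m + 1) * q ^ K := by
      intro K
      have h1 : ‖β K * ν (m + K) * w ^ (m + K + 1)‖
          = ‖β K * ν (m + K)‖ * (‖w‖) ^ (m + K + 1) := by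
        rw [norm_mul, norm_pow]
      have h2 : ‖β K * ν (m + K) * (ρ:ℂ) ^ (m + K + 1)‖
          = ‖β K * ν (m + K)‖ * ρ ^ (m + K + 1) := by
        rw [norm_mul, norm_pow, Complex.norm_real, Real.norm_eq_abs, abs_of_pos hρ0]
      have h3 : (‖w‖) ^ (m + K + 1) = q ^ (m + K + 1) * ρ ^ (m + K + 1) := by
        rw [← mul_pow, hq, div_mul_cancel₀ _ (ne_of_gt hρ0)]
      calc ‖β K * ν (m + K) * w ^ (m + K + 1)‖
          = (‖β K * ν (m + K)‖ * ρ ^ (m + K + 1)) * q ^ (m + K + 1) := by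
            rw [h1, h3]; ring
        _ ≤ M * q ^ (m + K + 1) := by
            apply mul_le_mul_of_nonneg_right _ (by positivity)
            rw [← h2]; exact hM' K
        _ = M * q ^ (m + 1) * q ^ K := by
            rw [show m + K + 1 = (m + 1) + K by ring, pow_add]; ring
    have hlim0 : Tendsto (fun K : ℕ => M * q ^ (m + 1) * q ^ K) atTop (𝓝 0) := by
      have := (tendsto_pow_atTop_nhds_zero_of_lt_one hq0 hq1).const_mul (M * q ^ (m + 1))
      simpa using this
    have hz := squeeze_zero_norm hbnd hlim0
    have := tendsto_nhds_unique (hiota w hw) hz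
    exact sub_eq_zero.mp this
  -- identify `h` with `Mz^m (e 0)`
  have hMzpow : ∀ (k : ℕ) (f : H), ∀ w ∈ ball (0:ℂ) 1, ι ((Mz ^ k) f) w = w ^ k * ι f w := by
    intro k
    induction k with
    | zero => intro f w hw; simp
    | succ k ih =>
      intro f w hw
      rw [pow_succ, ContinuousLinearMap.mul_apply, ih (Mz f) w hw, hMz f w hw, pow_succ]
      ring
  have heq : h = (Mz ^ m) (e 0) := by
    apply hinj
    intro w hw
    rw [key w hw, hMzpow m (e 0) w hw, he 0 w hw]
    ring
  rw [← heq]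
  exact hnorm

/-- Tridiagonal setting with `M_z` bounded on `H`: if `M_z*` is hypercyclic on `H` then
`liminf_n |μ_n| = 0`. -/
theorem stmt13 {H : Type*}
    [NormedAddCommGroup H] [InnerProductSpace ℂ H] [CompleteSpace H]
    [TopologicalSpace.SeparableSpace H]
    (ι : H →ₗ[ℂ] (ℂ → ℂ))
    (hinj : ∀ f g : H, Set.EqOn (ι f) (ι g) (ball (0 : ℂ) 1) → f = g)
    (hanal : ∀ f : H, DifferentiableOn ℂ (ι f) (ball (0 : ℂ) 1))
    (heval : ∀ w ∈ ball (0 : ℂ) 1, Continuous fun f : H => ι f w)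
    (μ ν : ℕ → ℂ) (hμ : ∀ n, μ n ≠ 0) (hν : ∀ n, ν n ≠ 0)
    (r R : ℝ)
    (hr : ∀ n, ‖μ n / μ (n + 1)‖ ≤ r)
    (hR : ∀ n, ‖ν n / μ (n + 1)‖ ≤ R)
    (hR1 : R < 1)
    (e : ℕ → H)
    (he : ∀ n, ∀ w ∈ ball (0 : ℂ) 1, ι (e n) w = μ n * w ^ n + ν n * w ^ (n + 1))
    (hON : Orthonormal ℂ e)
    (htotal : Dense ((Submodule.span ℂ (Set.range e) : Submodule ℂ H) : Set H))
    (Mz : H →L[ℂ] H)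
    (hMz : ∀ f : H, ∀ w ∈ ball (0 : ℂ) 1, ι (Mz f) w = w * ι f w)
    (hhyp : ∃ g : H, Dense (Set.range fun m : ℕ => ((adjoint Mz) ^ m) g)) :
    liminf (fun n : ℕ => ((‖μ n‖ : ℝ) : EReal)) atTop = 0 := by
  by_contra hne
  have h0le : (0:EReal) ≤ liminf (fun n : ℕ => ((‖μ n‖ : ℝ) : EReal)) atTop := by
    refine Filter.le_liminf_of_le (by isBoundedDefault)
      (Filter.Eventually.of_forall fun n => ?_)
    exact EReal.coe_nonneg.mpr (norm_nonneg _)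
  have hpos : (0:EReal) < liminf (fun n : ℕ => ((‖μ n‖ : ℝ) : EReal)) atTop :=
    lt_of_le_of_ne h0le (Ne.symm hne)
  obtain ⟨c, hc0, hcL⟩ := exists_between hpos
  have hcT : c ≠ ⊤ := ne_top_of_lt hcL
  have hcB : c ≠ ⊥ := ne_bot_of_gt hc0
  set δ : ℝ := c.toReal with hδdef
  have hcoe : (δ : EReal) = c := EReal.coe_toReal hcT hcB
  have hδ : 0 < δ := by
    rw [← EReal.coe_lt_coe_iff]
    rw [hcoe]
    exact_mod_cast hc0
  have hev : ∀ᶠ n in atTop, (δ : EReal) < ((‖μ n‖ : ℝ) : EReal) := by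
    rw [hcoe]
    exact Filter.eventually_lt_of_lt_liminf hcL
  obtain ⟨N, hN⟩ := eventually_atTop.mp hev
  have hNδ : ∀ n, N ≤ n → δ ≤ ‖μ n‖ := fun n hn =>
    (EReal.coe_lt_coe_iff.mp (hN n hn)).le
  obtain ⟨g, hg⟩ := hhyp
  set C : ℝ := ‖μ 0‖ / δ
      + (‖ν 0‖ + R * ‖μ 0‖) / δ * (1 - R)⁻¹ with hC
  have hkey : ∀ m, N ≤ m → ‖(Mz ^ m) (e 0)‖ ≤ C := fun m hm =>
    stmt13_aux ι hinj heval μ ν hμ R hR hR1 e he hON.1 Mz hMz δ hδ N hNδ m hm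
  set b : ℕ → ℂ := fun m => (inner ℂ (e 0) (((adjoint Mz) ^ m) g) : ℂ) with hb
  have hadj : ∀ m : ℕ, (adjoint Mz) ^ m = adjoint (Mz ^ m) := by
    intro m
    rw [← ContinuousLinearMap.star_eq_adjoint, ← ContinuousLinearMap.star_eq_adjoint, ← star_pow]
  have hbbound : ∀ m, N ≤ m → ‖b m‖ ≤ C * ‖g‖ := by
    intro m hm
    rw [hb]
    simp only
    rw [hadj m, ContinuousLinearMap.adjoint_inner_right]
    calc ‖(inner ℂ ((Mz ^ m) (e 0)) g : ℂ)‖ ≤ ‖(Mz ^ m) (e 0)‖ * ‖g‖ := norm_inner_le_norm _ _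
      _ ≤ C * ‖g‖ := mul_le_mul_of_nonneg_right (hkey m hm) (norm_nonneg g)
  set B : ℝ := max (C * ‖g‖)
      ((Finset.range (N + 1)).sup' (Finset.nonempty_range_iff.mpr (Nat.succ_ne_zero N))
        fun m => ‖b m‖) with hB
  have hBall : ∀ m, ‖b m‖ ≤ B := by
    intro m
    rcases le_or_gt m N with hmN | hmN
    · exact le_max_of_le_right
        (Finset.le_sup' (fun m => ‖b m‖) (Finset.mem_range.mpr (by omega)))
    · exact le_max_of_le_left (hbbound m (by omega))
  have hB0 : 0 ≤ B := le_trans (norm_nonneg (b 0)) (hBall 0)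
  -- use density of the orbit to contradict boundedness of `b`
  have hg' : DenseRange (fun m : ℕ => ((adjoint Mz) ^ m) g) := hg
  obtain ⟨m, hm⟩ := hg'.exists_dist_lt ((((B + 2 : ℝ) : ℂ)) • e 0) one_pos
  have he00 : (inner ℂ (e 0) (e 0) : ℂ) = 1 := by
    rw [inner_self_eq_norm_sq_to_K, hON.1 0]
    norm_num
  have hdiff : ‖b m - ((B + 2 : ℝ) : ℂ)‖ < 1 := by
    have h1 : b m - ((B + 2 : ℝ) : ℂ)
        = (inner ℂ (e 0) (((adjoint Mz) ^ m) g - (((B + 2 : ℝ) : ℂ)) • e 0) : ℂ) := by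
      rw [inner_sub_right, inner_smul_right, he00, mul_one]
    rw [h1]
    calc ‖(inner ℂ (e 0) (((adjoint Mz) ^ m) g - (((B + 2 : ℝ) : ℂ)) • e 0) : ℂ)‖
        ≤ ‖e 0‖ * ‖((adjoint Mz) ^ m) g - (((B + 2 : ℝ) : ℂ)) • e 0‖ := norm_inner_le_norm _ _
      _ = ‖((adjoint Mz) ^ m) g - (((B + 2 : ℝ) : ℂ)) • e 0‖ := by rw [hON.1 0, one_mul]
      _ = dist ((((B + 2 : ℝ) : ℂ)) • e 0) (((adjoint Mz) ^ m) g) := by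
          rw [dist_eq_norm, norm_sub_rev]
      _ < 1 := hm
  have hnz : ‖(((B + 2 : ℝ) : ℂ))‖ = B + 2 := by
    rw [Complex.norm_real, Real.norm_eq_abs, abs_of_nonneg (by linarith)]
  have : B + 2 ≤ ‖b m‖ + ‖b m - ((B + 2 : ℝ) : ℂ)‖ := by
    calc B + 2 = ‖(((B + 2 : ℝ) : ℂ))‖ := hnz.symm
      _ = ‖b m - (b m - ((B + 2 : ℝ) : ℂ))‖ := by ring_nf
      _ ≤ ‖b m‖ + ‖b m - ((B + 2 : ℝ) : ℂ)‖ := norm_sub_le _ _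
  have := hBall m
  linarith [hdiff]
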